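/- Under the hypotheses that all singular values of S U_C lie in [√(1−ε), √(1+ε)] where U_C is an orthonormal basis of range([A;B]), for all vectors w ∈ ℝ^n and y ∈ ℝ^ℓ one has |w^T A^T B y − w^T A^T S^T S B y| ≤ ε · ‖A w‖₂ · ‖B y‖₂. -/

import Mathlib

open Matrix

theorem Matrix.isHermitian_transpose_mul_self {p q : ℕ} (X : Matrix (Fin p) (Fin q) ℝ) :
    (Xᵀ * X).IsHermitian := by
  simpa [Matrix.conjTranspose_eq_transpose_of_trivial] using
    Matrix.isHermitian_conjTranspose_mul_self X

noncomputable def svals {p q : ℕ} (X : Matrix (Fin p) (Fin q) ℝ) : Fin q → ℝ :=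
  fun i => Real.sqrt ((Matrix.isHermitian_transpose_mul_self X).eigenvalues
    (Tuple.sort ((Matrix.isHermitian_transpose_mul_self X).eigenvalues) i.rev))

noncomputable def sNorm {p q : ℕ} (X : Matrix (Fin p) (Fin q) ℝ) : ℝ :=
  ⨆ i, svals X i

lemma dp_mulVec {k k' : ℕ} (M : Matrix (Fin k) (Fin k') ℝ) (x : Fin k' → ℝ) (z : Fin k → ℝ) :
    (M *ᵥ x) ⬝ᵥ z = x ⬝ᵥ (Mᵀ *ᵥ z) := by
  rw [dotProduct_mulVec, vecMul_transpose, dotProduct_comm]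

lemma key {k : ℕ} (H : Matrix (Fin k) (Fin k) ℝ) (hH : H.IsHermitian) (ε : ℝ) (hε : 0 ≤ ε)
    (hl : ∀ i, |hH.eigenvalues i - 1| ≤ ε) (a b : Fin k → ℝ) :
    |a ⬝ᵥ b - a ⬝ᵥ H.mulVec b| ≤ ε * Real.sqrt (a ⬝ᵥ a) * Real.sqrt (b ⬝ᵥ b) := by
  set U : Matrix (Fin k) (Fin k) ℝ := (hH.eigenvectorUnitary : Matrix (Fin k) (Fin k) ℝ) with hU
  have hUU : U * Uᵀ = 1 := by
    have := Matrix.mem_unitaryGroup_iff.mp hH.eigenvectorUnitary.2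
    rwa [star_eq_conjTranspose, conjTranspose_eq_transpose_of_trivial] at this
  set α := Uᵀ *ᵥ a with hα
  set β := Uᵀ *ᵥ b with hβ
  have hdpab : ∀ x z : Fin k → ℝ, x ⬝ᵥ z = (Uᵀ *ᵥ x) ⬝ᵥ (Uᵀ *ᵥ z) := by
    intro x z
    rw [dp_mulVec, transpose_transpose, mulVec_mulVec, hUU, one_mulVec]
  obtain ⟨e, he⟩ : ∃ e, e = hH.eigenvalues := ⟨_, rfl⟩
  have hspec : H = U * diagonal e * Uᵀ := by
    have := hH.spectral_theorem
    simp only [Unitary.conjStarAlgAut_apply, Unitary.coe_star] at this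
    rwa [star_eq_conjTranspose, conjTranspose_eq_transpose_of_trivial,
      show (RCLike.ofReal ∘ hH.eigenvalues : Fin k → ℝ) = hH.eigenvalues from rfl, ← he] at this
  have hHb : a ⬝ᵥ H *ᵥ b = ∑ i, e i * α i * β i := by
    rw [hspec, ← mulVec_mulVec, ← mulVec_mulVec, dotProduct_comm, dp_mulVec, dotProduct_comm,
      ← hβ, ← hα]
    simp [mulVec_diagonal, dotProduct, Finset.mul_sum, mul_comm, mul_assoc, mul_left_comm]
  have hab : a ⬝ᵥ b = ∑ i, α i * β i := by rw [hdpab a b]; rfl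
  have hdiff : a ⬝ᵥ b - a ⬝ᵥ H *ᵥ b = ∑ i, (1 - e i) * (α i * β i) := by
    rw [hab, hHb, ← Finset.sum_sub_distrib]
    congr 1; funext i; ring
  rw [hdiff]
  calc |∑ i, (1 - e i) * (α i * β i)|
      ≤ ∑ i, |(1 - e i) * (α i * β i)| := Finset.abs_sum_le_sum_abs _ _
    _ ≤ ∑ i, ε * (|α i| * |β i|) := by
        apply Finset.sum_le_sum
        intro i _
        rw [abs_mul, abs_mul]
        apply mul_le_mul_of_nonneg_right _ (by positivity)
        rw [abs_sub_comm, he]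
        exact hl i
    _ = ε * ∑ i, |α i| * |β i| := by rw [Finset.mul_sum]
    _ ≤ ε * (Real.sqrt (∑ i, |α i| ^ 2) * Real.sqrt (∑ i, |β i| ^ 2)) := by
        apply mul_le_mul_of_nonneg_left _ hε
        exact Real.sum_mul_le_sqrt_mul_sqrt _ _ _
    _ = ε * Real.sqrt (a ⬝ᵥ a) * Real.sqrt (b ⬝ᵥ b) := by
        rw [hdpab a a, hdpab b b, mul_assoc]
        congr 2 <;> · congr 1; simp [dotProduct, sq_abs, pow_two]; rfl

theorem stmt9 {m n ℓ ω r : ℕ}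
    (A : Matrix (Fin m) (Fin n) ℝ) (B : Matrix (Fin m) (Fin ℓ) ℝ)
    (UC : Matrix (Fin m) (Fin ω) ℝ) (S : Matrix (Fin r) (Fin m) ℝ)
    (hω : ω = (Matrix.fromCols A B).rank)
    (hUC : UCᵀ * UC = 1)
    (hrC : LinearMap.range UC.mulVecLin = LinearMap.range (Matrix.fromCols A B).mulVecLin)
    (ε : ℝ) (hε0 : 0 < ε) (hε1 : ε < 1)
    (hsv : ∀ i, Real.sqrt (1 - ε) ≤ svals (S * UC) i ∧ svals (S * UC) i ≤ Real.sqrt (1 + ε))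
    (w : Fin n → ℝ) (y : Fin ℓ → ℝ) :
    |w ⬝ᵥ (Aᵀ * B).mulVec y - w ⬝ᵥ (Aᵀ * Sᵀ * S * B).mulVec y| ≤
      ε * Real.sqrt (A.mulVec w ⬝ᵥ A.mulVec w) * Real.sqrt (B.mulVec y ⬝ᵥ B.mulVec y) := by
  -- abbreviations
  set u := A.mulVec w with hu
  set v := B.mulVec y with hv
  -- u, v are in the range of UC
  have hmem : ∀ x, x ∈ LinearMap.range (Matrix.fromCols A B).mulVecLin →
      ∃ c, UC *ᵥ c = x := by
    intro x hx
    rw [← hrC] at hx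
    obtain ⟨c, hc⟩ := hx
    exact ⟨c, hc⟩
  obtain ⟨a, ha⟩ := hmem u ⟨Sum.elim w 0, by
    simp [mulVecLin_apply, fromCols_mulVec, hu]⟩
  obtain ⟨b, hb⟩ := hmem v ⟨Sum.elim 0 y, by
    simp [mulVecLin_apply, fromCols_mulVec, hv]⟩
  -- translate dot products
  have h1 : w ⬝ᵥ (Aᵀ * B) *ᵥ y = u ⬝ᵥ v := by
    rw [← mulVec_mulVec, dotProduct_mulVec w Aᵀ, vecMul_transpose]
  have h2 : w ⬝ᵥ (Aᵀ * Sᵀ * S * B) *ᵥ y = (S *ᵥ u) ⬝ᵥ (S *ᵥ v) := by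
    rw [show Aᵀ * Sᵀ * S * B = Aᵀ * (Sᵀ * (S * B)) by rw [Matrix.mul_assoc, Matrix.mul_assoc],
      ← mulVec_mulVec, dotProduct_mulVec w Aᵀ, vecMul_transpose, ← hu,
      ← mulVec_mulVec, ← mulVec_mulVec, ← hv, ← dp_mulVec S u]
  -- rewrite in terms of a, b and H = (S*UC)ᵀ * (S*UC)
  have huv : u ⬝ᵥ v = a ⬝ᵥ b := by
    rw [← ha, ← hb, dp_mulVec, mulVec_mulVec, hUC, one_mulVec]
  have hSuv : (S *ᵥ u) ⬝ᵥ (S *ᵥ v) = a ⬝ᵥ ((S * UC)ᵀ * (S * UC)) *ᵥ b := by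
    rw [← ha, ← hb, mulVec_mulVec, mulVec_mulVec, dp_mulVec, mulVec_mulVec]
  have huu : u ⬝ᵥ u = a ⬝ᵥ a := by rw [← ha, dp_mulVec, mulVec_mulVec, hUC, one_mulVec]
  have hvv : v ⬝ᵥ v = b ⬝ᵥ b := by rw [← hb, dp_mulVec, mulVec_mulVec, hUC, one_mulVec]
  rw [h1, h2, huv, hSuv, huu, hvv]
  -- eigenvalue bounds
  have heig : ∀ j, |(Matrix.isHermitian_transpose_mul_self (S * UC)).eigenvalues j - 1| ≤ ε := by
    set hH := Matrix.isHermitian_transpose_mul_self (S * UC) with hHdef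
    intro j
    have hnn : 0 ≤ hH.eigenvalues j := by
      have hpsd : ((S * UC)ᵀ * (S * UC)).PosSemidef := by
        rw [← conjTranspose_eq_transpose_of_trivial]
        exact posSemidef_conjTranspose_mul_self _
      exact hpsd.eigenvalues_nonneg j
    set σ := Tuple.sort hH.eigenvalues with hσ
    have hj : σ ((σ⁻¹ j : Fin ω).rev.rev) = j := by
      rw [Fin.rev_rev]; simp
    obtain ⟨hlow, hhigh⟩ := hsv ((σ⁻¹ j : Fin ω).rev)
    unfold svals at hlow hhigh
    rw [← hσ, hj] at hlow hhigh
    have h1e : (1 : ℝ) - ε ≤ hH.eigenvalues j := (Real.sqrt_le_sqrt_iff hnn).mp hlow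
    have h2e : hH.eigenvalues j ≤ 1 + ε := (Real.sqrt_le_sqrt_iff (by linarith)).mp hhigh
    rw [abs_le]; constructor <;> linarith
  exact key _ (Matrix.isHermitian_transpose_mul_self (S * UC)) ε hε0.le heig a b
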